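/- For every finite set F of patterns over a nonempty finite alphabet A, there exists an L_A-sentence φ of the form ∀v ψ(v), where ψ is quantifier-free (with terms built by applying East, West, North, South to the single variable v), such that X_φ = X_F; that is, every subshift of finite type is definable by a first-order sentence with a single universal quantifier. -/

import Mathlib

open FirstOrder

/-- The four unary function symbols East, West, North, South. -/
inductive Dir : Type
  | east | west | north | south

/-- The first-order language `L_A`: four unary function symbols and a unary
relation symbol `P_c` for each colour `c ∈ A`. -/
def LA (A : Type) : FirstOrder.Language where
  Functions := fun n => match n with
    | 1 => Dir
    | _ => Empty
  Relations := fun n => match n with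
    | 1 => A
    | _ => Empty

/-- The `L_A`-structure `M_x` on `ℤ × ℤ` associated to a configuration `x`. -/
def struc (A : Type) (x : ℤ × ℤ → A) : (LA A).Structure (ℤ × ℤ) where
  funMap {n} f v :=
    match n, f, v with
    | 1, Dir.east, v => ((v 0).1 + 1, (v 0).2)
    | 1, Dir.west, v => ((v 0).1 - 1, (v 0).2)
    | 1, Dir.north, v => ((v 0).1, (v 0).2 + 1)
    | 1, Dir.south, v => ((v 0).1, (v 0).2 - 1)
  RelMap {n} r v :=
    match n, r, v with
    | 1, c, v => x (v 0) = c

/-- `M_x ⊨ φ`. -/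
def Models {A : Type} (x : ℤ × ℤ → A) (φ : (LA A).Sentence) : Prop :=
  @FirstOrder.Language.Sentence.Realize (LA A) (ℤ × ℤ) (struc A x) φ

/-- A pattern over the alphabet `A`: a finite domain `D ⊆ ℤ × ℤ` together with
an assignment of colours (only the values on `dom` are relevant). -/
structure Pattern (A : Type*) where
  dom : Finset (ℤ × ℤ)
  val : ℤ × ℤ → A

/-- A pattern `P` appears in the configuration `x` if some translate of `x`
agrees with `P` on its domain. -/
def Appears {A : Type*} (P : Pattern A) (x : ℤ × ℤ → A) : Prop :=
  ∃ v : ℤ × ℤ, ∀ u ∈ P.dom, P.val u = x (u + v)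

/-- The set `X_F` of configurations avoiding every pattern of `F`. -/
def XofF {A : Type*} (F : Set (Pattern A)) : Set (ℤ × ℤ → A) :=
  {x | ∀ P ∈ F, ¬ Appears P x}

section Aux
variable {A : Type}

/-- Apply a direction symbol to a term. -/
def dirT (d : Dir) (t : (LA A).Term (Empty ⊕ Fin 1)) : (LA A).Term (Empty ⊕ Fin 1) :=
  Language.Term.func (l := 1) (d : (LA A).Functions 1) (fun _ => t)

/-- Term evaluating to `u + (value of t)`. -/
def shiftT (u : ℤ × ℤ) (t : (LA A).Term (Empty ⊕ Fin 1)) : (LA A).Term (Empty ⊕ Fin 1) :=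
  (if 0 ≤ u.2 then (dirT Dir.north)^[u.2.toNat] else (dirT Dir.south)^[(-u.2).toNat])
    ((if 0 ≤ u.1 then (dirT Dir.east)^[u.1.toNat] else (dirT Dir.west)^[(-u.1).toNat]) t)

variable (x : ℤ × ℤ → A)

lemma funMap_dir (d : Dir) (f : Fin 1 → ℤ × ℤ) :
    @Language.Structure.funMap (LA A) _ (struc A x) 1 d f =
      (match d with
       | Dir.east => ((f 0).1 + 1, (f 0).2)
       | Dir.west => ((f 0).1 - 1, (f 0).2)
       | Dir.north => ((f 0).1, (f 0).2 + 1)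
       | Dir.south => ((f 0).1, (f 0).2 - 1)) := by
  cases d <;> rfl

lemma realize_iter (d : Dir) (w : ℤ × ℤ)
    (hw : ∀ p : ℤ × ℤ, @Language.Structure.funMap (LA A) _ (struc A x) 1 d (fun _ => p) = p + w)
    (n : ℕ) (t : (LA A).Term (Empty ⊕ Fin 1)) (v : Empty ⊕ Fin 1 → ℤ × ℤ) :
    @Language.Term.realize (LA A) _ (struc A x) _ v ((dirT d)^[n] t) =
      @Language.Term.realize (LA A) _ (struc A x) _ v t + n • w := by
  letI := struc A x
  induction n with
  | zero => simp
  | succ n ih =>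
    rw [Function.iterate_succ_apply']
    have h2 : Language.Term.realize v (dirT d ((dirT d)^[n] t)) =
        Language.Term.realize v ((dirT d)^[n] t) + w :=
      hw (Language.Term.realize v ((dirT d)^[n] t))
    rw [h2, ih, succ_nsmul, add_assoc]

lemma funMap_east (p : ℤ × ℤ) :
    @Language.Structure.funMap (LA A) _ (struc A x) 1 Dir.east (fun _ => p) = p + (1, 0) := by
  rw [funMap_dir]; ext <;> simp
lemma funMap_west (p : ℤ × ℤ) :
    @Language.Structure.funMap (LA A) _ (struc A x) 1 Dir.west (fun _ => p) = p + (-1, 0) := by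
  rw [funMap_dir]; ext <;> simp <;> ring
lemma funMap_north (p : ℤ × ℤ) :
    @Language.Structure.funMap (LA A) _ (struc A x) 1 Dir.north (fun _ => p) = p + (0, 1) := by
  rw [funMap_dir]; ext <;> simp
lemma funMap_south (p : ℤ × ℤ) :
    @Language.Structure.funMap (LA A) _ (struc A x) 1 Dir.south (fun _ => p) = p + (0, -1) := by
  rw [funMap_dir]; ext <;> simp <;> ring

lemma realize_shiftT (u : ℤ × ℤ) (t : (LA A).Term (Empty ⊕ Fin 1))
    (v : Empty ⊕ Fin 1 → ℤ × ℤ) :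
    @Language.Term.realize (LA A) _ (struc A x) _ v (shiftT u t) =
      u + @Language.Term.realize (LA A) _ (struc A x) _ v t := by
  letI := struc A x
  unfold shiftT
  rcases le_or_gt 0 u.1 with h1 | h1 <;> rcases le_or_gt 0 u.2 with h2 | h2
  · rw [if_pos h1, if_pos h2, realize_iter x Dir.north _ (funMap_north x),
      realize_iter x Dir.east _ (funMap_east x)]
    refine Prod.ext ?_ ?_ <;> simp <;> omega
  · rw [if_pos h1, if_neg (not_le.mpr h2), realize_iter x Dir.south _ (funMap_south x),
      realize_iter x Dir.east _ (funMap_east x)]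
    refine Prod.ext ?_ ?_ <;> simp <;> omega
  · rw [if_neg (not_le.mpr h1), if_pos h2, realize_iter x Dir.north _ (funMap_north x),
      realize_iter x Dir.west _ (funMap_west x)]
    refine Prod.ext ?_ ?_ <;> simp <;> omega
  · rw [if_neg (not_le.mpr h1), if_neg (not_le.mpr h2), realize_iter x Dir.south _ (funMap_south x),
      realize_iter x Dir.west _ (funMap_west x)]
    refine Prod.ext ?_ ?_ <;> simp <;> omega

lemma relMap_struc (c : A) (f : Fin 1 → ℤ × ℤ) :
    @Language.Structure.RelMap (LA A) _ (struc A x) 1 c f ↔ x (f 0) = c := Iff.rfl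

end Aux

section Formulas
variable {A : Type}

/-- Atomic formula asserting colour `c` at offset `u` from the variable. -/
def atomF (c : A) (u : ℤ × ℤ) : (LA A).BoundedFormula Empty 1 :=
  Language.Relations.boundedFormula (show (LA A).Relations 1 from c)
    (fun _ => shiftT u (Language.Term.var (Sum.inr 0)))

lemma atomF_isQF (c : A) (u : ℤ × ℤ) : (atomF c u).IsQF :=
  (Language.BoundedFormula.IsAtomic.rel _ _).isQF

lemma realize_atomF (x : ℤ × ℤ → A) (c : A) (u : ℤ × ℤ) (v : Empty → ℤ × ℤ)
    (xs : Fin 1 → ℤ × ℤ) :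
    @Language.BoundedFormula.Realize (LA A) _ (struc A x) _ _ (atomF c u) v xs ↔
      x (u + xs 0) = c := by
  letI := struc A x
  rw [atomF, Language.BoundedFormula.realize_rel]
  refine (relMap_struc x c _).trans ?_
  rw [realize_shiftT]
  simp

/-- Conjunction of a list of formulas. -/
def conjList : List ((LA A).BoundedFormula Empty 1) → (LA A).BoundedFormula Empty 1
  | [] => ⊤
  | f :: l => f ⊓ conjList l

lemma conjList_isQF (l : List ((LA A).BoundedFormula Empty 1))
    (h : ∀ f ∈ l, f.IsQF) : (conjList l).IsQF := by
  induction l with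
  | nil => exact Language.BoundedFormula.IsQF.top
  | cons f l ih =>
    exact (h f (by simp)).inf (ih fun g hg => h g (by simp [hg]))

lemma realize_conjList (x : ℤ × ℤ → A) (l : List ((LA A).BoundedFormula Empty 1))
    (v : Empty → ℤ × ℤ) (xs : Fin 1 → ℤ × ℤ) :
    @Language.BoundedFormula.Realize (LA A) _ (struc A x) _ _ (conjList l) v xs ↔
      ∀ f ∈ l, @Language.BoundedFormula.Realize (LA A) _ (struc A x) _ _ f v xs := by
  letI := struc A x
  induction l with
  | nil => simp [conjList]
  | cons f l ih =>
    rw [conjList, Language.BoundedFormula.realize_inf]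
    simp only [ih, List.mem_cons]
    constructor
    · rintro ⟨h1, h2⟩ g (rfl | hg)
      · exact h1
      · exact h2 g hg
    · intro h
      exact ⟨h f (Or.inl rfl), fun g hg => h g (Or.inr hg)⟩

/-- Formula saying pattern `P` occurs at the variable position. -/
noncomputable def patF (P : Pattern A) : (LA A).BoundedFormula Empty 1 :=
  conjList (P.dom.toList.map fun u => atomF (P.val u) u)

lemma realize_patF (x : ℤ × ℤ → A) (P : Pattern A) (v : Empty → ℤ × ℤ)
    (xs : Fin 1 → ℤ × ℤ) :
    @Language.BoundedFormula.Realize (LA A) _ (struc A x) _ _ (patF P) v xs ↔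
      ∀ u ∈ P.dom, P.val u = x (u + xs 0) := by
  rw [patF, realize_conjList]
  constructor
  · intro h u hu
    have := h (atomF (P.val u) u) (List.mem_map.mpr ⟨u, Finset.mem_toList.mpr hu, rfl⟩)
    rw [realize_atomF] at this
    exact this.symm
  · intro h f hf
    obtain ⟨u, hu, rfl⟩ := List.mem_map.mp hf
    rw [realize_atomF]
    exact (h u (Finset.mem_toList.mp hu)).symm

end Formulas

/-- Every subshift of finite type `X_F` (with `F` finite) is definable by an
`L_A`-sentence of the form `∀v ψ(v)` with `ψ` quantifier-free. -/
theorem SFT_definable_by_universal_sentence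
    {A : Type} [Fintype A] [Nonempty A]
    (F : Set (Pattern A)) (hF : F.Finite) :
    ∃ ψ : (LA A).BoundedFormula Empty 1, ψ.IsQF ∧
      ∀ x : ℤ × ℤ → A, Models x ψ.all ↔ x ∈ XofF F := by
  classical
  refine ⟨conjList (hF.toFinset.toList.map fun P => (patF P).not), ?_, ?_⟩
  · exact conjList_isQF _ fun f hf => by
      obtain ⟨P, _, rfl⟩ := List.mem_map.mp hf
      exact (conjList_isQF _ fun g hg => by
        obtain ⟨u, _, rfl⟩ := List.mem_map.mp hg
        exact atomF_isQF _ _).not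
  · intro x
    letI := struc A x
    constructor
    · intro h P hP ⟨a, ha⟩
      have h1 := (Language.BoundedFormula.realize_all).mp h a
      rw [realize_conjList] at h1
      have h2 := h1 ((patF P).not)
        (List.mem_map.mpr ⟨P, by simp [hF.mem_toFinset, hP], rfl⟩)
      rw [Language.BoundedFormula.realize_not, realize_patF] at h2
      exact h2 fun u hu => by simpa [Fin.snoc] using ha u hu
    · intro h
      rw [Models, Language.Sentence.Realize, Language.Formula.Realize,
        Language.BoundedFormula.realize_all]
      intro a
      rw [realize_conjList]
      intro f hf
      obtain ⟨P, hP, rfl⟩ := List.mem_map.mp hf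
      rw [Language.BoundedFormula.realize_not, realize_patF]
      intro hc
      exact h P (by simpa [hF.mem_toFinset] using hP)
        ⟨a, fun u hu => by simpa [Fin.snoc] using hc u hu⟩
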